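/- arXiv:2312.01034 — 7 statements merged into one kernel-verified Lean document; each statement's English description precedes it below -/
import Mathlib

section
/- Fix p ∈ [1,∞] and let D ∈ 𝒟^p. If the mean-deviation model U(X) = V(E[X], D(X)) satisfies monotonicity [M] (i.e., X ≤ Y a.s. implies U(X) ≤ U(Y)), then U(X) < ∞ for every X ∈ L^p, and the quantity K := sup over nonconstant X ∈ L^p of D(X)/(ess-sup X − E[X]) satisfies 0 < K < ∞; equivalently, there exists λ > 0 (namely λ = 1/K) such that λD is range normalized. -/
open MeasureTheory Filter Set
open scoped ENNReal

noncomputable section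

variable {Ω : Type*} [MeasurableSpace Ω]

/-- The measure `μ` is nonatomic. -/
def Nonatomic (μ : Measure Ω) : Prop :=
  ∀ A : Set Ω, MeasurableSet A → 0 < μ A →
    ∃ B, B ⊆ A ∧ MeasurableSet B ∧ 0 < μ B ∧ μ B < μ A

/-- `X` is a.s. equal to a constant. -/
def AEConst (μ : Measure Ω) (X : Ω → ℝ) : Prop :=
  ∃ c : ℝ, X =ᵐ[μ] fun _ => c

/-- `D` is a deviation measure on `L^p`: it is `[0,∞)`-valued and satisfies
(D1) translation invariance, (D2) strict positivity on nonconstant random variables,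
(D3) positive homogeneity and (D4) subadditivity. -/
def IsDeviation (μ : Measure Ω) (p : ℝ≥0∞) (D : (Ω → ℝ) → ℝ) : Prop :=
  (∀ X, MemLp X p μ → 0 ≤ D X) ∧
  (∀ X, MemLp X p μ → ∀ c : ℝ, D (fun ω => X ω + c) = D X) ∧
  (∀ X, MemLp X p μ → ¬ AEConst μ X → 0 < D X) ∧
  (∀ X, MemLp X p μ → ∀ l : ℝ, 0 ≤ l → D (fun ω => l * X ω) = l * D X) ∧
  (∀ X Y, MemLp X p μ → MemLp Y p μ → D (fun ω => X ω + Y ω) ≤ D X + D Y)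

/-- (D5) law invariance. -/
def LawInvariant (μ : Measure Ω) (p : ℝ≥0∞) (D : (Ω → ℝ) → ℝ) : Prop :=
  ∀ X Y, MemLp X p μ → MemLp Y p μ → μ.map X = μ.map Y → D X = D Y

/-- `D` is range normalized: the supremum over nonconstant `X ∈ L^p` of
`D X / (ess-sup X - E[X])` equals `1` (the ratio being interpreted as `0` when
`ess-sup X = ∞`, so that only essentially bounded `X` matter):
`1` is an upper bound of the ratios, and no `k < 1` is an upper bound. -/
def RangeNormalized (μ : Measure Ω) (p : ℝ≥0∞) (D : (Ω → ℝ) → ℝ) : Prop :=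
  (∀ X, MemLp X p μ → (∃ c : ℝ, ∀ᵐ ω ∂μ, X ω ≤ c) →
    D X ≤ essSup X μ - ∫ ω, X ω ∂μ) ∧
  (∀ k : ℝ, k < 1 → ∃ X, MemLp X p μ ∧ (∃ c : ℝ, ∀ᵐ ω ∂μ, X ω ≤ c) ∧ ¬ AEConst μ X ∧
    k * (essSup X μ - ∫ ω, X ω ∂μ) < D X)

/-- Monotonicity [M] for a real-valued functional on `L^p`. -/
def MonotoneRM (μ : Measure Ω) (p : ℝ≥0∞) (ρ : (Ω → ℝ) → ℝ) : Prop :=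
  ∀ X Y, MemLp X p μ → MemLp Y p μ → (∀ᵐ ω ∂μ, X ω ≤ Y ω) → ρ X ≤ ρ Y

/-- Cash additivity [CA]. -/
def CashAdditive (μ : Measure Ω) (p : ℝ≥0∞) (ρ : (Ω → ℝ) → ℝ) : Prop :=
  ∀ X, MemLp X p μ → ∀ c : ℝ, ρ (fun ω => X ω + c) = ρ X + c

/-- Positive homogeneity [PH]. -/
def PosHom (μ : Measure Ω) (p : ℝ≥0∞) (ρ : (Ω → ℝ) → ℝ) : Prop :=
  ∀ X, MemLp X p μ → ∀ l : ℝ, 0 < l → ρ (fun ω => l * X ω) = l * ρ X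

/-- Subadditivity [SA]. -/
def SubadditiveRM (μ : Measure Ω) (p : ℝ≥0∞) (ρ : (Ω → ℝ) → ℝ) : Prop :=
  ∀ X Y, MemLp X p μ → MemLp Y p μ → ρ (fun ω => X ω + Y ω) ≤ ρ X + ρ Y

/-- Convexity [Cx]. -/
def ConvexRMProp (μ : Measure Ω) (p : ℝ≥0∞) (ρ : (Ω → ℝ) → ℝ) : Prop :=
  ∀ X Y, MemLp X p μ → MemLp Y p μ → ∀ l : ℝ, 0 ≤ l → l ≤ 1 →
    ρ (fun ω => l * X ω + (1 - l) * Y ω) ≤ l * ρ X + (1 - l) * ρ Y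

/-- SSD-consistency [SC]: `ρ X ≤ ρ Y` whenever `E[u(X)] ≤ E[u(Y)]` for every
increasing convex `u` (for which both expectations exist). -/
def SSDConsistent (μ : Measure Ω) (p : ℝ≥0∞) (ρ : (Ω → ℝ) → ℝ) : Prop :=
  ∀ X Y, MemLp X p μ → MemLp Y p μ →
    (∀ u : ℝ → ℝ, Monotone u → ConvexOn ℝ univ u →
      Integrable (fun ω => u (X ω)) μ → Integrable (fun ω => u (Y ω)) μ →
      ∫ ω, u (X ω) ∂μ ≤ ∫ ω, u (Y ω) ∂μ) →
    ρ X ≤ ρ Y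

/-- Monetary risk measure: [M] and [CA]. -/
def Monetary (μ : Measure Ω) (p : ℝ≥0∞) (ρ : (Ω → ℝ) → ℝ) : Prop :=
  MonotoneRM μ p ρ ∧ CashAdditive μ p ρ

/-- Coherent risk measure: [M], [CA], [PH], [SA]. -/
def Coherent (μ : Measure Ω) (p : ℝ≥0∞) (ρ : (Ω → ℝ) → ℝ) : Prop :=
  MonotoneRM μ p ρ ∧ CashAdditive μ p ρ ∧ PosHom μ p ρ ∧ SubadditiveRM μ p ρ

/-- Convex risk measure: monetary and [Cx]. -/
def ConvexRiskMeasure (μ : Measure Ω) (p : ℝ≥0∞) (ρ : (Ω → ℝ) → ℝ) : Prop :=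
  Monetary μ p ρ ∧ ConvexRMProp μ p ρ

/-- Consistent risk measure: monetary and [SC]. -/
def ConsistentRiskMeasure (μ : Measure Ω) (p : ℝ≥0∞) (ρ : (Ω → ℝ) → ℝ) : Prop :=
  Monetary μ p ρ ∧ SSDConsistent μ p ρ

/-- Star-shaped risk measure: monetary, normalized at `0` and star-shaped. -/
def StarShapedRM (μ : Measure Ω) (p : ℝ≥0∞) (ρ : (Ω → ℝ) → ℝ) : Prop :=
  Monetary μ p ρ ∧ ρ (fun _ => 0) = 0 ∧
    ∀ X, MemLp X p μ → ∀ l : ℝ, 0 ≤ l → l ≤ 1 → ρ (fun ω => l * X ω) ≤ l * ρ X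

/-- `g ∈ 𝒢`: a risk-weighting function, i.e. a nonconstant, increasing,
1-Lipschitz function on `[0,∞)` with `g 0 = 0`. -/
def IsRiskWeight (g : ℝ → ℝ) : Prop :=
  (∃ x y : ℝ, 0 ≤ x ∧ 0 ≤ y ∧ g x ≠ g y) ∧ MonotoneOn g (Ici 0) ∧
  (∀ x y : ℝ, 0 ≤ x → 0 ≤ y → |g x - g y| ≤ |x - y|) ∧ g 0 = 0

/-- The monotonic mean-deviation measure `MD^D_g = g ∘ D + E`. -/
def MD (μ : Measure Ω) (D : (Ω → ℝ) → ℝ) (g : ℝ → ℝ) (X : Ω → ℝ) : ℝ :=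
  g (D X) + ∫ ω, X ω ∂μ

/-- `V : ℝ × [0,∞) → (−∞,∞]` defining a mean-deviation model:
increasing in each argument, `V m 0 = m`, never `−∞`, and depending
nontrivially on the deviation argument. -/
def IsMDModelV (V : ℝ → ℝ → EReal) : Prop :=
  (∀ d : ℝ, 0 ≤ d → Monotone (fun m => V m d)) ∧
  (∀ m : ℝ, MonotoneOn (fun d => V m d) (Ici 0)) ∧
  (∀ m : ℝ, V m 0 = (m : EReal)) ∧
  (∀ m d : ℝ, 0 ≤ d → V m d ≠ ⊥) ∧
  (∃ m d₁ d₂ : ℝ, 0 ≤ d₁ ∧ 0 ≤ d₂ ∧ V m d₁ ≠ V m d₂)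

/-- Monotonicity [M] for an `(−∞,∞]`-valued functional. -/
def MonotoneE (μ : Measure Ω) (p : ℝ≥0∞) (U : (Ω → ℝ) → EReal) : Prop :=
  ∀ X Y, MemLp X p μ → MemLp Y p μ → (∀ᵐ ω ∂μ, X ω ≤ Y ω) → U X ≤ U Y

/-- Cash additivity [CA] for an `(−∞,∞]`-valued functional. -/
def CashAdditiveE (μ : Measure Ω) (p : ℝ≥0∞) (U : (Ω → ℝ) → EReal) : Prop :=
  ∀ X, MemLp X p μ → ∀ c : ℝ, U (fun ω => X ω + c) = U X + (c : EReal)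

/-- SSD-consistency [SC] for an `(−∞,∞]`-valued functional. -/
def SSDConsistentE (μ : Measure Ω) (p : ℝ≥0∞) (U : (Ω → ℝ) → EReal) : Prop :=
  ∀ X Y, MemLp X p μ → MemLp Y p μ →
    (∀ u : ℝ → ℝ, Monotone u → ConvexOn ℝ univ u →
      Integrable (fun ω => u (X ω)) μ → Integrable (fun ω => u (Y ω)) μ →
      ∫ ω, u (X ω) ∂μ ≤ ∫ ω, u (Y ω) ∂μ) →
    U X ≤ U Y

/-- Left derivative of a real function. -/
def leftDeriv (f : ℝ → ℝ) (x : ℝ) : ℝ := derivWithin f (Iio x) x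

/-- The conjugate function `g*(y) = sup_{x ≥ 0} (x y − g x)`, with values in `(−∞,∞]`. -/
def conjFun (g : ℝ → ℝ) (y : ℝ) : EReal :=
  ⨆ x : Ici (0:ℝ), ((x.1 * y - g x.1 : ℝ) : EReal)

/-- Value-at-Risk: the left `α`-quantile of `X`. -/
def VaR (μ : Measure Ω) (X : Ω → ℝ) (α : ℝ) : ℝ :=
  sInf {x : ℝ | ENNReal.ofReal α ≤ μ {ω | X ω ≤ x}}

/-- The signed Choquet integral `D_h(X) = ∫₀¹ VaR_α(X) h'(1−α) dα`. -/
def Dh (μ : Measure Ω) (h : ℝ → ℝ) (X : Ω → ℝ) : ℝ :=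
  ∫ α in (0:ℝ)..1, VaR μ X α * leftDeriv h (1 - α)

/-- `Φ^p` (described via the conjugate exponent `q`): concave functions `h` on `[0,1]`
with `h 0 = h 1 = 0` and `‖h'‖_q < ∞`. -/
def PhiSet (q : ℝ≥0∞) : Set (ℝ → ℝ) :=
  {h | ConcaveOn ℝ (Icc 0 1) h ∧ h 0 = 0 ∧ h 1 = 0 ∧
    MemLp (leftDeriv h) q ((volume : Measure ℝ).restrict (Ioo 0 1))}

/-- The `L²[0,1]` norm of a function. -/
def Lnorm2 (f : ℝ → ℝ) : ℝ := Real.sqrt (∫ t in (0:ℝ)..1, (f t) ^ 2)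

/-- Left quantile function of a distribution (probability measure) on `ℝ`. -/
def qtl (ν : Measure ℝ) (u : ℝ) : ℝ := sInf {x : ℝ | ENNReal.ofReal u ≤ ν (Iic x)}

/-- Convex order `X ≤_cx Y`: `E[φ(X)] ≤ E[φ(Y)]` for every convex `φ` for which
both expectations exist. -/
def ConvexOrder (μ : Measure Ω) (X Y : Ω → ℝ) : Prop :=
  ∀ φ : ℝ → ℝ, ConvexOn ℝ univ φ → Integrable (fun ω => φ (X ω)) μ →
    Integrable (fun ω => φ (Y ω)) μ → ∫ ω, φ (X ω) ∂μ ≤ ∫ ω, φ (Y ω) ∂μ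

/-- `R` is a total preorder on `L^p`. -/
def TotalPreorderOn (μ : Measure Ω) (p : ℝ≥0∞) (R : (Ω → ℝ) → (Ω → ℝ) → Prop) : Prop :=
  (∀ X, MemLp X p μ → R X X) ∧
  (∀ X Y Z, MemLp X p μ → MemLp Y p μ → MemLp Z p μ → R X Y → R Y Z → R X Z) ∧
  (∀ X Y, MemLp X p μ → MemLp Y p μ → R X Y ∨ R Y X)

/-- Axiom A1 (monotonicity): `X ≤ Y` a.s. implies `X ≽ Y`. -/
def AxiomA1 (μ : Measure Ω) (p : ℝ≥0∞) (R : (Ω → ℝ) → (Ω → ℝ) → Prop) : Prop :=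
  ∀ X Y, MemLp X p μ → MemLp Y p μ → (∀ᵐ ω ∂μ, X ω ≤ Y ω) → R X Y

/-- Axiom B1: for constants `c₁ ≤ c₂` one has `c₁ ≽ c₂`. -/
def AxiomB1 (R : (Ω → ℝ) → (Ω → ℝ) → Prop) : Prop :=
  ∀ c₁ c₂ : ℝ, c₁ ≤ c₂ → R (fun _ => c₁) (fun _ => c₂)

/-- Axiom A2 (translation invariance). -/
def AxiomA2 (μ : Measure Ω) (p : ℝ≥0∞) (R : (Ω → ℝ) → (Ω → ℝ) → Prop) : Prop :=
  ∀ X Y, MemLp X p μ → MemLp Y p μ → ∀ c : ℝ,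
    (R X Y ↔ R (fun ω => X ω + c) (fun ω => Y ω + c))

/-- Axiom A3 (weak positive homogeneity). -/
def AxiomA3 (μ : Measure Ω) (p : ℝ≥0∞) (R : (Ω → ℝ) → (Ω → ℝ) → Prop) : Prop :=
  ∀ X Y, MemLp X p μ → MemLp Y p μ → (∫ ω, X ω ∂μ) = (∫ ω, Y ω ∂μ) → R X Y →
    ∀ l : ℝ, 0 < l → R (fun ω => l * X ω) (fun ω => l * Y ω)

/-- Axiom A4 (risk aversion). -/
def AxiomA4 (μ : Measure Ω) (p : ℝ≥0∞) (R : (Ω → ℝ) → (Ω → ℝ) → Prop) : Prop :=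
  (∀ X Y, MemLp X p μ → MemLp Y p μ → ConvexOrder μ X Y → R X Y) ∧
  (∀ X, MemLp X p μ → ¬ AEConst μ X →
    R (fun _ => ∫ ω, X ω ∂μ) X ∧ ¬ R X (fun _ => ∫ ω, X ω ∂μ))

/-- Axiom A5 (solvability). -/
def AxiomA5 (μ : Measure Ω) (p : ℝ≥0∞) (R : (Ω → ℝ) → (Ω → ℝ) → Prop) : Prop :=
  ∀ X, MemLp X p μ → ∃ c : ℝ, R X (fun _ => c) ∧ R (fun _ => c) X

/-- Axiom A6 (weak convexity). -/
def AxiomA6 (μ : Measure Ω) (p : ℝ≥0∞) (R : (Ω → ℝ) → (Ω → ℝ) → Prop) : Prop :=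
  ∀ X Y, MemLp X p μ → MemLp Y p μ → (∫ ω, X ω ∂μ) = (∫ ω, Y ω ∂μ) →
    R X Y → R Y X →
    ∀ l : ℝ, 0 ≤ l → l ≤ 1 → R (fun ω => l * X ω + (1 - l) * Y ω) X

/-- Axiom A7 (continuity): the upper and lower sets of every `X` are closed in the
`L^p` norm (expressed via sequential closedness, equivalent in the metric space `L^p`). -/
def AxiomA7 (μ : Measure Ω) (p : ℝ≥0∞) (R : (Ω → ℝ) → (Ω → ℝ) → Prop) : Prop :=
  ∀ X, MemLp X p μ →
    (∀ (Y : ℕ → Ω → ℝ) (Z : Ω → ℝ), (∀ n, MemLp (Y n) p μ) → MemLp Z p μ →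
      Tendsto (fun n => eLpNorm (fun ω => Y n ω - Z ω) p μ) atTop (nhds 0) →
      (∀ n, R (Y n) X) → R Z X) ∧
    (∀ (Y : ℕ → Ω → ℝ) (Z : Ω → ℝ), (∀ n, MemLp (Y n) p μ) → MemLp Z p μ →
      Tendsto (fun n => eLpNorm (fun ω => Y n ω - Z ω) p μ) atTop (nhds 0) →
      (∀ n, R X (Y n)) → R X Z)
lemma dev_const_aux (μ : Measure Ω) [IsProbabilityMeasure μ] (p : ℝ≥0∞)
    (D : (Ω → ℝ) → ℝ) (hD : IsDeviation μ p D) (c : ℝ) :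
    D (fun _ => c) = 0 := by
  have h0 : MemLp (fun _ : Ω => (0:ℝ)) p μ := memLp_const 0
  have hz : D (fun _ : Ω => (0:ℝ)) = 0 := by
    have := hD.2.2.2.1 (fun _ => (0:ℝ)) h0 0 le_rfl
    simpa using this
  have := hD.2.1 (fun _ => (0:ℝ)) h0 c
  simpa [hz] using this

lemma dev_aeconst_aux (μ : Measure Ω) [IsProbabilityMeasure μ] (p : ℝ≥0∞)
    (D : (Ω → ℝ) → ℝ) (hD : IsDeviation μ p D) (hDl : LawInvariant μ p D)
    {X : Ω → ℝ} (hX : MemLp X p μ) (h : AEConst μ X) : D X = 0 := by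
  obtain ⟨c, hc⟩ := h
  have hmap : μ.map X = μ.map (fun _ => c) := Measure.map_congr hc
  rw [hDl X (fun _ => c) hX (memLp_const c) hmap, dev_const_aux μ p D hD c]

/-- Lemma (prop:finite_K): if the mean-deviation model `U = V(E, D)` is monotone, then
`U X < ∞` for every `X ∈ L^p` and there is `λ > 0` such that `λD` is range normalized. -/
theorem meanDeviation_monotone_finite_and_rangeNormalized
    (μ : Measure Ω) [IsProbabilityMeasure μ] (hna : Nonatomic μ)
    (p : ℝ≥0∞) (hp : 1 ≤ p)
    (V : ℝ → ℝ → EReal) (hV : IsMDModelV V)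
    (D : (Ω → ℝ) → ℝ) (hD : IsDeviation μ p D) (hDl : LawInvariant μ p D)
    (hmono : MonotoneE μ p (fun X => V (∫ ω, X ω ∂μ) (D X))) :
    (∀ X, MemLp X p μ → V (∫ ω, X ω ∂μ) (D X) < ⊤) ∧
    ∃ l : ℝ, 0 < l ∧ RangeNormalized μ p (fun X => l * D X) := by
  obtain ⟨hVm, hVd, hV0, hVbot, m0, d1, d2, hd1, hd2, hne⟩ := hV
  have hD0 := hD.1
  have hD1 := hD.2.1
  have hD2 := hD.2.2.1
  have hD3 := hD.2.2.2.1
  -- a nontrivial set B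
  obtain ⟨B, -, hBm, hB0, hB1⟩ := hna univ MeasurableSet.univ (by simp)
  rw [measure_univ] at hB1
  set X₀ : Ω → ℝ := B.indicator 1 with hX₀def
  have hX₀pt : ∀ ω, X₀ ω ≤ 1 ∧ 0 ≤ X₀ ω := by
    intro ω
    by_cases hω : ω ∈ B <;> simp [hX₀def, hω]
  have hX₀m : MemLp X₀ p μ := by
    refine MemLp.of_bound ((measurable_one.indicator hBm).aestronglyMeasurable) 1
      (ae_of_all _ fun ω => ?_)
    rw [Real.norm_eq_abs, abs_le]
    exact ⟨by linarith [(hX₀pt ω).2], (hX₀pt ω).1⟩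
  have hX₀nc : ¬ AEConst μ X₀ := by
    rintro ⟨c, hc⟩
    have hnull : μ {ω | X₀ ω ≠ c} = 0 := by
      simpa [EventuallyEq, ae_iff] using hc
    by_cases h1c : c = 1
    · have hsub : Bᶜ ⊆ {ω | X₀ ω ≠ c} := by
        intro ω hω
        simp [hX₀def, Set.indicator_of_notMem hω, h1c]
      have hBc : μ Bᶜ = 0 := le_antisymm (hnull ▸ measure_mono hsub) zero_le
      rw [measure_compl hBm (measure_ne_top μ B), measure_univ,
        tsub_eq_zero_iff_le] at hBc
      exact absurd hBc (not_le.mpr hB1)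
    · have hsub : B ⊆ {ω | X₀ ω ≠ c} := by
        intro ω hω
        simp only [hX₀def, Set.mem_setOf_eq, Set.indicator_of_mem hω, Pi.one_apply]
        exact fun h => h1c h.symm
      have : μ B = 0 := le_antisymm (hnull ▸ measure_mono hsub) zero_le
      exact absurd this (ne_of_gt hB0)
  have hd₀ : 0 < D X₀ := hD2 X₀ hX₀m hX₀nc
  -- generic scale-and-shift construction
  have hshift : ∀ (X : Ω → ℝ), MemLp X p μ → ∀ l c : ℝ, 0 ≤ l →
      MemLp (fun ω => l * X ω + c) p μ ∧
      (∫ ω, (l * X ω + c) ∂μ) = l * (∫ ω, X ω ∂μ) + c ∧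
      D (fun ω => l * X ω + c) = l * D X := by
    intro X hX l c hl
    have hlX : MemLp (fun ω => l * X ω) p μ := hX.const_mul l
    refine ⟨hlX.add (memLp_const c), ?_, ?_⟩
    · rw [integral_add (((hX.integrable hp).const_mul l)) (integrable_const c),
        integral_const_mul]
      simp [measure_univ]
    · have h1 := hD1 (fun ω => l * X ω) hlX c
      have h2 := hD3 X hX l hl
      simpa [h2] using h1
  -- the monotone upper bound
  have hUbe : ∀ (Z : Ω → ℝ), MemLp Z p μ → ∀ b : ℝ, (∀ᵐ ω ∂μ, Z ω ≤ b) →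
      V (∫ ω, Z ω ∂μ) (D Z) ≤ (b : EReal) := by
    intro Z hZ b hb
    have := hmono Z (fun _ => b) hZ (memLp_const b) hb
    simpa [dev_const_aux μ p D hD b, measure_univ, hV0] using this
  -- finiteness of V on ℝ × [0,∞)
  have hfin : ∀ m d : ℝ, 0 ≤ d → V m d < ⊤ := by
    intro m d hd
    have hl : (0:ℝ) ≤ d / D X₀ := div_nonneg hd hd₀.le
    obtain ⟨hZm, hZi, hZD⟩ := hshift X₀ hX₀m (d / D X₀) (m - d / D X₀ * ∫ ω, X₀ ω ∂μ) hl
    have hDZ : D (fun ω => d / D X₀ * X₀ ω + (m - d / D X₀ * ∫ ω, X₀ ω ∂μ)) = d := by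
      rw [hZD, div_mul_cancel₀ _ (ne_of_gt hd₀)]
    have hIZ : (∫ ω, (d / D X₀ * X₀ ω + (m - d / D X₀ * ∫ ω, X₀ ω ∂μ)) ∂μ) = m := by
      rw [hZi]; ring
    have hb : ∀ᵐ ω ∂μ, d / D X₀ * X₀ ω + (m - d / D X₀ * ∫ ω, X₀ ω ∂μ) ≤
        d / D X₀ * 1 + (m - d / D X₀ * ∫ ω, X₀ ω ∂μ) := by
      refine ae_of_all _ fun ω => ?_
      have := mul_le_mul_of_nonneg_left (hX₀pt ω).1 hl
      linarith
    have := hUbe _ hZm _ hb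
    rw [hIZ, hDZ] at this
    exact lt_of_le_of_lt this (EReal.coe_lt_top _)
  have part1 : ∀ X, MemLp X p μ → V (∫ ω, X ω ∂μ) (D X) < ⊤ := fun X hX =>
    hfin _ _ (hD0 X hX)
  refine ⟨part1, ?_⟩
  -- extract a strict increase point of V m0 ·
  have key : ∃ d : ℝ, 0 < d ∧ (m0 : EReal) < V m0 d := by
    have main : ∀ da db : ℝ, 0 ≤ da → 0 ≤ db → da ≤ db → V m0 da ≠ V m0 db →
        ∃ d : ℝ, 0 < d ∧ (m0 : EReal) < V m0 d := by
      intro da db hda hdb hab hne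
      have h1 : V m0 da ≤ V m0 db := hVd m0 hda hdb hab
      have h2 : V m0 0 ≤ V m0 da := hVd m0 (le_refl (0:ℝ)) hda hda
      rw [hV0 m0] at h2
      refine ⟨db, ?_, lt_of_le_of_lt h2 (lt_of_le_of_ne h1 hne)⟩
      rcases lt_or_eq_of_le hdb with h | h
      · exact h
      · exfalso
        have hda0 : da = 0 := le_antisymm (h ▸ hab) hda
        exact hne (by rw [hda0, ← h])
    rcases le_total d1 d2 with h | h
    · exact main d1 d2 hd1 hd2 h hne
    · exact main d2 d1 hd2 hd1 h (Ne.symm hne)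
  obtain ⟨d', hd'pos, hd'lt⟩ := key
  obtain ⟨v, hv⟩ : ∃ v : ℝ, V m0 d' = (v : EReal) := by
    have h1 : V m0 d' ≠ ⊤ := (hfin m0 d' hd'pos.le).ne
    have h2 : V m0 d' ≠ ⊥ := hVbot m0 d' hd'pos.le
    lift V m0 d' to ℝ using ⟨h1, h2⟩ with v hv
    exact ⟨v, rfl⟩
  rw [hv] at hd'lt
  have hm0v : m0 < v := by exact_mod_cast hd'lt
  set ε : ℝ := v - m0 with hεdef
  have hε : 0 < ε := by simp [hεdef]; linarith
  -- the gap lemma: for bounded-above nonconstant X, E[X] < essSup X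
  have hgap : ∀ X : Ω → ℝ, MemLp X p μ → (∃ c : ℝ, ∀ᵐ ω ∂μ, X ω ≤ c) → ¬ AEConst μ X →
      (∀ᵐ ω ∂μ, X ω ≤ essSup X μ) ∧ (∫ ω, X ω ∂μ) < essSup X μ := by
    rintro X hX ⟨c, hc⟩ hnc
    have hbd : IsBoundedUnder (· ≤ ·) (ae μ) X := ⟨c, by simpa using hc⟩
    have hae : ∀ᵐ ω ∂μ, X ω ≤ essSup X μ := ae_le_essSup hbd
    have hint := hX.integrable hp
    have hle : (∫ ω, X ω ∂μ) ≤ essSup X μ := by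
      calc (∫ ω, X ω ∂μ) ≤ ∫ _ω, essSup X μ ∂μ :=
            integral_mono_ae hint (integrable_const _) hae
        _ = essSup X μ := by simp [measure_univ]
    refine ⟨hae, lt_of_le_of_ne hle fun heq => ?_⟩
    have hnn : 0 ≤ᵐ[μ] fun ω => essSup X μ - X ω := by
      filter_upwards [hae] with ω h
      simp only [Pi.zero_apply]; linarith
    have hint' : Integrable (fun ω => essSup X μ - X ω) μ :=
      (integrable_const _).sub hint
    have h0 : (∫ ω, (essSup X μ - X ω) ∂μ) = 0 := by
      rw [integral_sub (integrable_const _) hint]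
      simp [measure_univ, ← heq]
    have := (integral_eq_zero_iff_of_nonneg_ae hnn hint').mp h0
    refine hnc ⟨essSup X μ, ?_⟩
    filter_upwards [this] with ω h
    have : essSup X μ - X ω = 0 := h
    linarith
  -- the key bound: D X ≤ (d'/ε) * (essSup X - E X)
  have hKbound : ∀ X : Ω → ℝ, MemLp X p μ → (∃ c : ℝ, ∀ᵐ ω ∂μ, X ω ≤ c) →
      ¬ AEConst μ X → D X ≤ d' / ε * (essSup X μ - ∫ ω, X ω ∂μ) := by
    intro X hX hXb hXnc
    obtain ⟨hae, hlt⟩ := hgap X hX hXb hXnc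
    set s : ℝ := essSup X μ - ∫ ω, X ω ∂μ with hsdef
    have hs : 0 < s := by simp [hsdef]; linarith
    have hdX : 0 < D X := hD2 X hX hXnc
    have hl : (0:ℝ) ≤ d' / D X := div_nonneg hd'pos.le hdX.le
    obtain ⟨hZm, hZi, hZD⟩ := hshift X hX (d' / D X) (m0 - d' / D X * ∫ ω, X ω ∂μ) hl
    have hDZ : D (fun ω => d' / D X * X ω + (m0 - d' / D X * ∫ ω, X ω ∂μ)) = d' := by
      rw [hZD, div_mul_cancel₀ _ (ne_of_gt hdX)]
    have hIZ : (∫ ω, (d' / D X * X ω + (m0 - d' / D X * ∫ ω, X ω ∂μ)) ∂μ) = m0 := by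
      rw [hZi]; ring
    have hb : ∀ᵐ ω ∂μ, d' / D X * X ω + (m0 - d' / D X * ∫ ω, X ω ∂μ) ≤
        d' / D X * essSup X μ + (m0 - d' / D X * ∫ ω, X ω ∂μ) := by
      filter_upwards [hae] with ω h
      have := mul_le_mul_of_nonneg_left h hl
      linarith
    have hbnd := hUbe _ hZm _ hb
    rw [hIZ, hDZ, hv] at hbnd
    have hvle : v ≤ d' / D X * essSup X μ + (m0 - d' / D X * ∫ ω, X ω ∂μ) := by
      exact_mod_cast hbnd
    have hεle : ε ≤ d' / D X * s := by
      have hx : d' / D X * s = d' / D X * essSup X μ - d' / D X * ∫ ω, X ω ∂μ := by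
        rw [hsdef]; ring
      rw [hεdef, hx]; linarith
    rw [div_mul_eq_mul_div, le_div_iff₀ hε]
    have h2 : ε * D X ≤ d' / D X * s * D X :=
      mul_le_mul_of_nonneg_right hεle hdX.le
    have h3 : d' / D X * s * D X = d' * s := by
      field_simp
    rw [h3] at h2
    linarith
  -- define the supremum K
  set S : Set ℝ := {r | ∃ X : Ω → ℝ, MemLp X p μ ∧ (∃ c : ℝ, ∀ᵐ ω ∂μ, X ω ≤ c) ∧
      ¬ AEConst μ X ∧ r = D X / (essSup X μ - ∫ ω, X ω ∂μ)} with hSdef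
  have hX₀b : ∃ c : ℝ, ∀ᵐ ω ∂μ, X₀ ω ≤ c := ⟨1, ae_of_all _ fun ω => (hX₀pt ω).1⟩
  have hs₀ : 0 < essSup X₀ μ - ∫ ω, X₀ ω ∂μ := by
    have := (hgap X₀ hX₀m hX₀b hX₀nc).2; linarith
  have hr₀S : D X₀ / (essSup X₀ μ - ∫ ω, X₀ ω ∂μ) ∈ S :=
    ⟨X₀, hX₀m, hX₀b, hX₀nc, rfl⟩
  have hSne : S.Nonempty := ⟨_, hr₀S⟩
  have hSbdd : BddAbove S := by
    refine ⟨d' / ε, fun r hr => ?_⟩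
    obtain ⟨X, hXm, hXb, hXnc, hr⟩ := hr
    have hs : 0 < essSup X μ - ∫ ω, X ω ∂μ := by
      have := (hgap X hXm hXb hXnc).2; linarith
    rw [hr, div_le_iff₀ hs]
    exact hKbound X hXm hXb hXnc
  set K : ℝ := sSup S with hKdef
  have hK0 : 0 < K :=
    lt_of_lt_of_le (div_pos hd₀ hs₀) (le_csSup hSbdd hr₀S)
  refine ⟨K⁻¹, inv_pos.mpr hK0, ?_, ?_⟩
  · -- upper bound clause
    intro X hXm hXb
    show K⁻¹ * D X ≤ essSup X μ - ∫ ω, X ω ∂μ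
    by_cases hXc : AEConst μ X
    · obtain ⟨c, hc⟩ := hXc
      have hDX : D X = 0 := dev_aeconst_aux μ p D hD hDl hXm ⟨c, hc⟩
      have hE : essSup X μ = c := by
        rw [essSup_congr_ae hc, essSup_const']
      have hI : (∫ ω, X ω ∂μ) = c := by
        rw [integral_congr_ae hc]; simp [measure_univ]
      rw [hDX, hE, hI]; simp
    · have hs : 0 < essSup X μ - ∫ ω, X ω ∂μ := by
        have := (hgap X hXm hXb hXc).2; linarith
      have hrK : D X / (essSup X μ - ∫ ω, X ω ∂μ) ≤ K :=
        le_csSup hSbdd ⟨X, hXm, hXb, hXc, rfl⟩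
      rw [div_le_iff₀ hs] at hrK
      rw [inv_mul_le_iff₀ hK0]
      linarith [hrK]
  · -- sharpness clause
    intro k hk
    have hkK : k * K < K := by nlinarith
    obtain ⟨r, hrS, hkr⟩ := exists_lt_of_lt_csSup hSne hkK
    obtain ⟨X, hXm, hXb, hXnc, hr⟩ := hrS
    refine ⟨X, hXm, hXb, hXnc, ?_⟩
    show k * (essSup X μ - ∫ ω, X ω ∂μ) < K⁻¹ * D X
    have hs : 0 < essSup X μ - ∫ ω, X ω ∂μ := by
      have := (hgap X hXm hXb hXnc).2; linarith
    rw [hr, lt_div_iff₀ hs] at hkr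
    have h1 := (mul_lt_mul_iff_right₀ (inv_pos.mpr hK0)).mpr hkr
    calc k * (essSup X μ - ∫ ω, X ω ∂μ)
        = K⁻¹ * (k * K * (essSup X μ - ∫ ω, X ω ∂μ)) := by
          field_simp
      _ < K⁻¹ * D X := h1
end
end

section
/- Fix p ∈ [1,∞] and let D ∈ 𝒟^p. Then D is range normalized (D ∈ 𝒟̄^p) if and only if the functional X ↦ D(X) + E[X] on L^p is a coherent risk measure and, for every λ > 1, the functional X ↦ λD(X) + E[X] is not a coherent risk measure. -/
open MeasureTheory Filter Set
open scoped ENNReal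

noncomputable section

variable {Ω : Type*} [MeasurableSpace Ω]

section AuxCoherent

variable {μ : Measure Ω} {p : ℝ≥0∞} {D : (Ω → ℝ) → ℝ}

/-- Any real random variable is cobounded from below a.e. (for a probability measure). -/
lemma aux_ae_isCobounded (μ : Measure Ω) [IsProbabilityMeasure μ] (Z : Ω → ℝ) :
    Filter.IsCoboundedUnder (· ≤ ·) (ae μ) Z := by
  haveI : (ae μ).NeBot := ae_neBot.2 (IsProbabilityMeasure.ne_zero μ)
  by_cases h : ∀ n : ℕ, ∀ᵐ ω ∂μ, Z ω ≤ -(n : ℝ)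
  · exfalso
    obtain ⟨ω, hω⟩ := (ae_all_iff.2 h).exists
    obtain ⟨n, hn⟩ := exists_nat_gt (-Z ω)
    have := hω n
    linarith
  · push_neg at h
    obtain ⟨n, hn⟩ := h
    refine ⟨-(n : ℝ), fun a ha => ?_⟩
    rw [Filter.eventually_map] at ha
    by_contra hlt
    push_neg at hlt
    exact hn (ha.mono fun ω h' => not_lt.2 (h'.trans hlt.le))

/-- A deviation measure vanishes on constants. -/
lemma aux_dev_const [IsFiniteMeasure μ] (hD : IsDeviation μ p D) (c : ℝ) :
    D (fun _ : Ω => c) = 0 := by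
  obtain ⟨h0, h1, h2, h3, h4⟩ := hD
  have hz : D (fun _ : Ω => (0 : ℝ)) = 0 := by
    have := h3 (fun _ => (0 : ℝ)) (memLp_const 0) 0 le_rfl
    simpa using this
  have := h1 (fun _ : Ω => (0 : ℝ)) (memLp_const 0) c
  simpa [hz] using this

/-- If `l·D + E` is monotone then `l·D X ≤ essSup X - E X` for bounded-above `X`. -/
lemma aux_bound_of_monotone [IsProbabilityMeasure μ] (hp : 1 ≤ p)
    (hD : IsDeviation μ p D) (l : ℝ)
    (hm : MonotoneRM μ p (fun X => l * D X + ∫ ω, X ω ∂μ)) :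
    ∀ X, MemLp X p μ → (∃ c : ℝ, ∀ᵐ ω ∂μ, X ω ≤ c) →
      l * D X ≤ essSup X μ - ∫ ω, X ω ∂μ := by
  rintro X hX ⟨c, hc⟩
  have hb : Filter.IsBoundedUnder (· ≤ ·) (ae μ) X := ⟨c, Filter.eventually_map.2 hc⟩
  have hle : ∀ᵐ ω ∂μ, X ω ≤ essSup X μ := ae_le_essSup hb
  have h := hm X (fun _ => essSup X μ) hX (memLp_const _) hle
  simp only at h
  rw [aux_dev_const hD, integral_const] at h
  simp only [probReal_univ, measure_univ, ENNReal.toReal_one, one_smul, mul_zero, zero_add] at h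
  linarith

/-- `l·D + E` is cash additive, positively homogeneous and subadditive for any `l ≥ 0`. -/
lemma aux_cps [IsProbabilityMeasure μ] (hp : 1 ≤ p) (hD : IsDeviation μ p D)
    (l : ℝ) (hl : 0 ≤ l) :
    CashAdditive μ p (fun X => l * D X + ∫ ω, X ω ∂μ) ∧
    PosHom μ p (fun X => l * D X + ∫ ω, X ω ∂μ) ∧
    SubadditiveRM μ p (fun X => l * D X + ∫ ω, X ω ∂μ) := by
  obtain ⟨h0, h1, h2, h3, h4⟩ := hD
  refine ⟨?_, ?_, ?_⟩
  · intro X hX c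
    simp only
    rw [h1 X hX c, integral_add (hX.integrable hp) (integrable_const c), integral_const]
    simp only [probReal_univ, measure_univ, ENNReal.toReal_one, one_smul]
    ring
  · intro X hX t ht
    simp only
    rw [h3 X hX t ht.le, integral_const_mul]
    ring
  · intro X Y hX hY
    simp only
    rw [integral_add (hX.integrable hp) (hY.integrable hp)]
    have h' := mul_le_mul_of_nonneg_left (h4 X Y hX hY) hl
    rw [mul_add] at h'
    linarith

/-- If `l·D X ≤ essSup X - E X` holds for all bounded-above `X`, then `l·D + E`
is a coherent risk measure. -/
lemma aux_coherent_of_bound [IsProbabilityMeasure μ] (hp : 1 ≤ p)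
    (hD : IsDeviation μ p D) (l : ℝ) (hl : 0 ≤ l)
    (hbd : ∀ X, MemLp X p μ → (∃ c : ℝ, ∀ᵐ ω ∂μ, X ω ≤ c) →
      l * D X ≤ essSup X μ - ∫ ω, X ω ∂μ) :
    Coherent μ p (fun X => l * D X + ∫ ω, X ω ∂μ) := by
  obtain ⟨hca, hph, hsa⟩ := aux_cps hp hD l hl
  refine ⟨?_, hca, hph, hsa⟩
  intro X Y hX hY hXY
  obtain ⟨h0, h1, h2, h3, h4⟩ := hD
  set Z : Ω → ℝ := fun ω => X ω - Y ω with hZdef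
  have hZ : MemLp Z p μ := hX.sub hY
  have hZ0 : ∀ᵐ ω ∂μ, Z ω ≤ 0 := hXY.mono fun ω h => by simp only [hZdef]; linarith
  have hDz := hbd Z hZ ⟨0, hZ0⟩
  have hess : essSup Z μ ≤ 0 := Filter.limsup_le_of_le (aux_ae_isCobounded μ Z) hZ0
  have hsum : D X ≤ D Y + D Z := by
    have h := h4 Y Z hY hZ
    have heq : (fun ω => Y ω + Z ω) = X := funext fun ω => by simp only [hZdef]; ring
    rwa [heq] at h
  have hint : ∫ ω, Z ω ∂μ = (∫ ω, X ω ∂μ) - ∫ ω, Y ω ∂μ :=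
    integral_sub (hX.integrable hp) (hY.integrable hp)
  have h' := mul_le_mul_of_nonneg_left hsum hl
  rw [mul_add] at h'
  simp only
  linarith

end AuxCoherent

/-- Proposition (prop:verify): `D ∈ 𝒟^p` is range normalized iff `D + E` is a coherent
risk measure and `λD + E` is not coherent for any `λ > 1`. -/
theorem rangeNormalized_iff_coherent
    (μ : Measure Ω) [IsProbabilityMeasure μ] (hna : Nonatomic μ)
    (p : ℝ≥0∞) (hp : 1 ≤ p)
    (D : (Ω → ℝ) → ℝ) (hD : IsDeviation μ p D) (hDl : LawInvariant μ p D) :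
    RangeNormalized μ p D ↔
      (Coherent μ p (fun X => D X + ∫ ω, X ω ∂μ) ∧
        ∀ l : ℝ, 1 < l → ¬ Coherent μ p (fun X => l * D X + ∫ ω, X ω ∂μ)) := by
  constructor
  · rintro ⟨ha, hb⟩
    constructor
    · have h := aux_coherent_of_bound hp hD 1 zero_le_one
        (fun X hX hbdd => by simpa using ha X hX hbdd)
      simpa only [one_mul] using h
    · intro l hl hcoh
      have hl0 : (0 : ℝ) < l := by linarith
      have hb' := aux_bound_of_monotone hp hD l hcoh.1
      obtain ⟨X, hX, hbdd, hnc, hlt⟩ := hb (1 / l)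
        (by rw [div_lt_one hl0]; linarith)
      have h2' := hb' X hX hbdd
      have hlt' : (essSup X μ - ∫ ω, X ω ∂μ) / l < D X := by
        rw [div_eq_inv_mul, ← one_div]; exact hlt
      have h3' := (div_lt_iff₀ hl0).mp hlt'
      linarith [mul_comm (D X) l]
  · rintro ⟨hcoh, hnotc⟩
    constructor
    · intro X hX hbdd
      have hm : MonotoneRM μ p (fun X => 1 * D X + ∫ ω, X ω ∂μ) := by
        simpa only [one_mul] using hcoh.1
      have := aux_bound_of_monotone hp hD 1 hm X hX hbdd
      linarith
    · intro k hk
      obtain ⟨h0, h1, h2, h3, h4⟩ := id hD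
      set m : ℝ := max k (1 / 2) with hmdef
      have hm0 : (0 : ℝ) < m := lt_of_lt_of_le (by norm_num) (le_max_right _ _)
      have hm1 : m < 1 := max_lt hk (by norm_num)
      set l : ℝ := 1 / m with hldef
      have hl1 : (1 : ℝ) < l := (one_lt_div hm0).2 hm1
      have hl0 : (0 : ℝ) < l := lt_trans one_pos hl1
      have hnc := hnotc l hl1
      obtain ⟨hca, hph, hsa⟩ := aux_cps (μ := μ) hp hD l hl0.le
      have hnm : ¬ MonotoneRM μ p (fun X => l * D X + ∫ ω, X ω ∂μ) :=
        fun h => hnc ⟨h, hca, hph, hsa⟩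
      unfold MonotoneRM at hnm
      push_neg at hnm
      obtain ⟨X, Y, hX, hY, hXY, hlt⟩ := hnm
      set Z : Ω → ℝ := fun ω => X ω - Y ω with hZdef
      have hZ : MemLp Z p μ := hX.sub hY
      have hZ0 : ∀ᵐ ω ∂μ, Z ω ≤ 0 := hXY.mono fun ω h => by simp only [hZdef]; linarith
      have hint : ∫ ω, Z ω ∂μ = (∫ ω, X ω ∂μ) - ∫ ω, Y ω ∂μ :=
        integral_sub (hX.integrable hp) (hY.integrable hp)
      have hsum : D X ≤ D Y + D Z := by
        have h := h4 Y Z hY hZ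
        have heq : (fun ω => Y ω + Z ω) = X := funext fun ω => by simp only [hZdef]; ring
        rwa [heq] at h
      have hkey : -(∫ ω, Z ω ∂μ) < l * D Z := by
        have h' := mul_le_mul_of_nonneg_left hsum hl0.le
        rw [mul_add] at h'
        linarith
      have hintle : ∫ ω, Z ω ∂μ ≤ 0 := integral_nonpos_of_ae hZ0
      have hDZ : 0 < D Z := by
        rcases (h0 Z hZ).lt_or_eq with h | h
        · exact h
        · exfalso
          rw [← h, mul_zero] at hkey
          linarith
      have hess : essSup Z μ ≤ 0 := Filter.limsup_le_of_le (aux_ae_isCobounded μ Z) hZ0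
      have hintes : ∫ ω, Z ω ∂μ ≤ essSup Z μ := by
        have hb : Filter.IsBoundedUnder (· ≤ ·) (ae μ) Z := ⟨0, Filter.eventually_map.2 hZ0⟩
        have hle : ∀ᵐ ω ∂μ, Z ω ≤ essSup Z μ := ae_le_essSup hb
        have := integral_mono_ae (hZ.integrable hp) (integrable_const _) hle
        simpa [measure_univ] using this
      have hnc' : ¬ AEConst μ Z := by
        rintro ⟨c, hc⟩
        have hmap : μ.map Z = μ.map (fun _ => c) := Measure.map_congr hc
        have hd0 : D Z = D (fun _ : Ω => c) := hDl Z _ hZ (memLp_const c) hmap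
        rw [aux_dev_const hD] at hd0
        linarith
      refine ⟨Z, hZ, ⟨0, hZ0⟩, hnc', ?_⟩
      have hs0 : 0 ≤ essSup Z μ - ∫ ω, Z ω ∂μ := by linarith
      have h6 : essSup Z μ - ∫ ω, Z ω ∂μ < l * D Z := by linarith
      have h7 : m * (essSup Z μ - ∫ ω, Z ω ∂μ) < D Z := by
        have hml : m * l = 1 := by rw [hldef]; field_simp
        have h9 := mul_lt_mul_of_pos_left h6 hm0
        rwa [← mul_assoc, hml, one_mul] at h9
      have h8 : k * (essSup Z μ - ∫ ω, Z ω ∂μ) ≤ m * (essSup Z μ - ∫ ω, Z ω ∂μ) :=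
        mul_le_mul_of_nonneg_right (le_max_left _ _) hs0
      linarith
end
end

section
/- Fix p ∈ [1,∞], D ∈ 𝒟̄^p and g ∈ 𝒢. Then the following are equivalent: (a) MD^D_g is a coherent risk measure; (b) MD^D_g is positively homogeneous (MD^D_g(λX) = λ MD^D_g(X) for all λ > 0 and X ∈ L^p); (c) g is linear, i.e., g(x) = g(1)·x for all x ≥ 0. -/
open MeasureTheory Filter Set
open scoped ENNReal

noncomputable section

variable {Ω : Type*} [MeasurableSpace Ω]

lemma essSup_nonpos_of_ae_nonpos {Ω : Type*} [MeasurableSpace Ω] (μ : Measure Ω)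
    (U : Ω → ℝ) (h : ∀ᵐ ω ∂μ, U ω ≤ 0) : essSup U μ ≤ 0 := by
  have h0 : (0:ℝ) ∈ {a : ℝ | ∀ᶠ n in Filter.map U (ae μ), n ≤ a} := by
    simpa [Filter.eventually_map] using h
  have heq : essSup U μ = sInf {a : ℝ | ∀ᶠ n in Filter.map U (ae μ), n ≤ a} := rfl
  rw [heq]
  by_cases hbd : BddBelow {a : ℝ | ∀ᶠ n in Filter.map U (ae μ), n ≤ a}
  · exact csInf_le hbd h0
  · rw [Real.sInf_of_not_bddBelow hbd]

/-- If `MD` is positively homogeneous then `g` is linear on `[0,∞)`. -/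
lemma MD_posHom_linear {Ω : Type*} [MeasurableSpace Ω]
    (μ : Measure Ω) [IsProbabilityMeasure μ] (hna : Nonatomic μ)
    (p : ℝ≥0∞) (hp : 1 ≤ p)
    (D : (Ω → ℝ) → ℝ) (hD : IsDeviation μ p D)
    (g : ℝ → ℝ) (hg : IsRiskWeight g)
    (hPH : PosHom μ p (MD μ D g)) : ∀ x : ℝ, 0 ≤ x → g x = g 1 * x := by
  obtain ⟨hD0, hD1, hD2, hD3, hD4⟩ := hD
  obtain ⟨B, _, hBm, hB0, hB1⟩ := hna univ MeasurableSet.univ (by simp)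
  set X0 : Ω → ℝ := B.indicator (fun _ => (1:ℝ)) with hX0def
  have hX0 : MemLp X0 p μ := memLp_indicator_const p hBm (1:ℝ) (Or.inr (measure_ne_top μ B))
  have hnc : ¬ AEConst μ X0 := by
    rintro ⟨c, hc⟩
    have hc' : μ {ω | ¬ X0 ω = c} = 0 := by
      simpa [Filter.EventuallyEq, ae_iff] using hc
    by_cases h1 : c = 1
    · have hsub : Bᶜ ⊆ {ω | ¬ X0 ω = c} := by
        intro ω hω
        simp only [hX0def, Set.mem_setOf_eq]
        rw [Set.indicator_of_notMem (Set.notMem_of_mem_compl hω), h1]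
        norm_num
      have hle : μ Bᶜ = 0 := le_antisymm (hc' ▸ measure_mono hsub) (by simp)
      rw [measure_compl hBm (measure_ne_top μ B)] at hle
      have : μ univ ≤ μ B := tsub_eq_zero_iff_le.mp hle
      exact absurd (lt_of_lt_of_le hB1 this) (lt_irrefl _)
    · have hsub : B ⊆ {ω | ¬ X0 ω = c} := by
        intro ω hω
        simp only [hX0def, Set.mem_setOf_eq]
        rw [Set.indicator_of_mem hω]
        exact fun hcon => h1 hcon.symm
      have : μ B = 0 := le_antisymm (hc' ▸ measure_mono hsub) (by simp)
      exact absurd (this ▸ hB0) (lt_irrefl _)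
  have hd : 0 < D X0 := hD2 X0 hX0 hnc
  set d := D X0 with hddef
  have key : ∀ l : ℝ, 0 < l → g (l * d) = l * g d := by
    intro l hl
    have h := hPH X0 hX0 l hl
    unfold MD at h
    rw [hD3 X0 hX0 l hl.le, integral_const_mul] at h
    linarith
  intro x hx
  rcases eq_or_lt_of_le hx with h | h
  · simp [← h, hg.2.2.2]
  · have h1 : g x = (x / d) * g d := by
      have := key (x / d) (div_pos h hd)
      rwa [div_mul_cancel₀ _ (ne_of_gt hd)] at this
    have h2 : g 1 = (1 / d) * g d := by
      have := key (1 / d) (div_pos one_pos hd)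
      rwa [div_mul_cancel₀ _ (ne_of_gt hd)] at this
    rw [h1, h2]
    field_simp

/-- If `g` is linear then `MD` is coherent. -/
lemma MD_linear_coherent {Ω : Type*} [MeasurableSpace Ω]
    (μ : Measure Ω) [IsProbabilityMeasure μ]
    (p : ℝ≥0∞) (hp : 1 ≤ p)
    (D : (Ω → ℝ) → ℝ) (hD : IsDeviation μ p D) (hDr : RangeNormalized μ p D)
    (g : ℝ → ℝ) (hg : IsRiskWeight g)
    (hlin : ∀ x : ℝ, 0 ≤ x → g x = g 1 * x) : Coherent μ p (MD μ D g) := by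
  obtain ⟨hD0, hD1, hD2, hD3, hD4⟩ := hD
  have hg1a : 0 ≤ g 1 := by
    have := hg.2.1 (Set.self_mem_Ici) (by norm_num : (1:ℝ) ∈ Ici 0) zero_le_one
    rwa [hg.2.2.2] at this
  have hg1b : g 1 ≤ 1 := by
    have := hg.2.2.1 1 0 zero_le_one le_rfl
    rw [hg.2.2.2] at this
    simp only [sub_zero] at this
    calc g 1 ≤ |g 1| := le_abs_self _
    _ ≤ |(1:ℝ)| := this
    _ = 1 := abs_one
  refine ⟨?_, ?_, ?_, ?_⟩
  · -- Monotone
    intro X Y hX hY hXY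
    set U : Ω → ℝ := fun ω => X ω - Y ω with hUdef
    have hU : MemLp U p μ := hX.sub hY
    have hUle : ∀ᵐ ω ∂μ, U ω ≤ 0 := hXY.mono fun ω h => sub_nonpos.2 h
    have hDU0 : 0 ≤ D U := hD0 U hU
    have hDU : D U ≤ essSup U μ - ∫ ω, U ω ∂μ := hDr.1 U hU ⟨0, hUle⟩
    have hess : essSup U μ ≤ 0 := essSup_nonpos_of_ae_nonpos μ U hUle
    have hEU : ∫ ω, U ω ∂μ ≤ 0 := integral_nonpos_of_ae hUle
    have hfe : (fun ω => U ω + Y ω) = X := by funext ω; simp [hUdef]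
    have hsub : D X ≤ D U + D Y := by
      have := hD4 U Y hU hY
      rwa [hfe] at this
    have hint : ∫ ω, U ω ∂μ = ∫ ω, X ω ∂μ - ∫ ω, Y ω ∂μ := by
      exact integral_sub (hX.integrable hp) (hY.integrable hp)
    unfold MD
    rw [hlin _ (hD0 X hX), hlin _ (hD0 Y hY)]
    nlinarith [mul_le_mul_of_nonneg_left hsub hg1a, mul_le_mul_of_nonneg_left hDU hg1a,
      mul_nonneg (by linarith : (0:ℝ) ≤ 1 - g 1) (by linarith : (0:ℝ) ≤ -∫ ω, U ω ∂μ),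
      mul_nonneg hg1a (by linarith : (0:ℝ) ≤ -essSup U μ)]
  · -- Cash additive
    intro X hX c
    unfold MD
    rw [hD1 X hX c, integral_add (hX.integrable hp) (integrable_const c)]
    simp [integral_const]
    ring
  · -- PosHom
    intro X hX l hl
    unfold MD
    rw [hD3 X hX l hl.le, integral_const_mul, hlin _ (mul_nonneg hl.le (hD0 X hX)),
      hlin _ (hD0 X hX)]
    ring
  · -- Subadditive
    intro X Y hX hY
    unfold MD
    rw [integral_add (hX.integrable hp) (hY.integrable hp),
      hlin _ (hD0 (fun ω => X ω + Y ω) (hX.add hY)), hlin _ (hD0 X hX), hlin _ (hD0 Y hY)]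
    have := hD4 X Y hX hY
    nlinarith [mul_le_mul_of_nonneg_left this hg1a]

/-- Theorem (prop:2 (i)): `MD^D_g` is coherent iff it is positively homogeneous iff
`g` is linear. -/
theorem MD_coherent_iff_posHom_iff_linear
    (μ : Measure Ω) [IsProbabilityMeasure μ] (hna : Nonatomic μ)
    (p : ℝ≥0∞) (hp : 1 ≤ p)
    (D : (Ω → ℝ) → ℝ) (hD : IsDeviation μ p D) (hDl : LawInvariant μ p D)
    (hDr : RangeNormalized μ p D)
    (g : ℝ → ℝ) (hg : IsRiskWeight g) :
    (Coherent μ p (MD μ D g) ↔ ∀ x : ℝ, 0 ≤ x → g x = g 1 * x) ∧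
    (PosHom μ p (MD μ D g) ↔ ∀ x : ℝ, 0 ≤ x → g x = g 1 * x) := by
  constructor
  · exact ⟨fun h => MD_posHom_linear μ hna p hp D hD g hg h.2.2.1,
      fun h => MD_linear_coherent μ p hp D hD hDr g hg h⟩
  · exact ⟨fun h => MD_posHom_linear μ hna p hp D hD g hg h,
      fun h => (MD_linear_coherent μ p hp D hD hDr g hg h).2.2.1⟩
end
end

section
/- Fix p ∈ [1,∞], D ∈ 𝒟̄^p and g ∈ 𝒢. Then MD^D_g is a convex risk measure if and only if g is a convex function on [0,∞). -/
open MeasureTheory Filter Set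
open scoped ENNReal

noncomputable section

variable {Ω : Type*} [MeasurableSpace Ω]

lemma exists_pos_meas_lb {Ω : Type*} [MeasurableSpace Ω] (μ : Measure Ω)
    [IsProbabilityMeasure μ] (Z : Ω → ℝ) : ∃ b : ℝ, 0 < μ {ω | b ≤ Z ω} := by
  by_contra h
  push_neg at h
  have h0 : ∀ b : ℝ, μ {ω | b ≤ Z ω} = 0 := fun b => le_antisymm (h b) bot_le
  have hnull : μ (⋃ n : ℕ, {ω | (-(n:ℝ)) ≤ Z ω}) = 0 := measure_iUnion_null fun n => h0 _
  have huniv : (⋃ n : ℕ, {ω | (-(n:ℝ)) ≤ Z ω}) = univ := by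
    ext ω; simp only [mem_iUnion, mem_setOf_eq, mem_univ, iff_true]
    obtain ⟨n, hn⟩ := exists_nat_ge (-(Z ω))
    exact ⟨n, by linarith⟩
  rw [huniv, measure_univ] at hnull
  simp at hnull

lemma essSup_le_zero' {Ω : Type*} [MeasurableSpace Ω] (μ : Measure Ω)
    [IsProbabilityMeasure μ] (Z : Ω → ℝ) (h : ∀ᵐ ω ∂μ, Z ω ≤ 0) : essSup Z μ ≤ 0 := by
  obtain ⟨b, hb⟩ := exists_pos_meas_lb μ Z
  have hcb : Filter.IsCoboundedUnder (· ≤ ·) (ae μ) Z := by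
    refine ⟨b, fun a ha => ?_⟩
    by_contra hab
    push_neg at hab
    have hsub : {ω | b ≤ Z ω} ⊆ {ω | ¬ Z ω ≤ a} := fun ω hω => by
      simp only [mem_setOf_eq] at *; linarith
    have hz : μ {ω | b ≤ Z ω} = 0 := measure_mono_null hsub ha
    simp [hz] at hb
  exact Filter.limsup_le_of_le hcb h

/-- Theorem (prop:2 (ii)): `MD^D_g` is a convex risk measure iff `g` is convex. -/
theorem MD_convexRiskMeasure_iff_convex
    (μ : Measure Ω) [IsProbabilityMeasure μ] (hna : Nonatomic μ)
    (p : ℝ≥0∞) (hp : 1 ≤ p)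
    (D : (Ω → ℝ) → ℝ) (hD : IsDeviation μ p D) (hDl : LawInvariant μ p D)
    (hDr : RangeNormalized μ p D)
    (g : ℝ → ℝ) (hg : IsRiskWeight g) :
    ConvexRiskMeasure μ p (MD μ D g) ↔ ConvexOn ℝ (Ici 0) g := by
  obtain ⟨hD0, hD1, hD2, hD3, hD4⟩ := hD
  obtain ⟨hg_nc, hg_mono, hg_lip, hg_0⟩ := hg
  constructor
  · -- convex risk measure → g convex
    rintro ⟨-, hCx⟩
    obtain ⟨X₀, hX₀, -, -, hX₀pos⟩ := hDr.2 0 (by norm_num)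
    have hd₀ : 0 < D X₀ := by simpa using hX₀pos
    refine ⟨convex_Ici 0, ?_⟩
    intro x hx y hy a b ha hb hab
    simp only [smul_eq_mul]
    have hx0 : (0:ℝ) ≤ x := hx
    have hy0 : (0:ℝ) ≤ y := hy
    set s₁ : ℝ := x / D X₀ with hs₁def
    set s₂ : ℝ := y / D X₀ with hs₂def
    have hs₁ : 0 ≤ s₁ := div_nonneg hx0 hd₀.le
    have hs₂ : 0 ≤ s₂ := div_nonneg hy0 hd₀.le
    have hb' : b = 1 - a := by linarith
    subst hb'
    have h := hCx (fun ω => s₁ * X₀ ω) (fun ω => s₂ * X₀ ω)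
      (hX₀.const_mul s₁) (hX₀.const_mul s₂) a ha (by linarith)
    set s : ℝ := a * s₁ + (1 - a) * s₂ with hsdef
    have hs : 0 ≤ s := add_nonneg (mul_nonneg ha hs₁)
      (mul_nonneg (by linarith) hs₂)
    have hfeq : (fun ω => a * (s₁ * X₀ ω) + (1 - a) * (s₂ * X₀ ω))
        = fun ω => s * X₀ ω := by funext ω; simp only [hsdef]; ring
    rw [hfeq] at h
    have hDX : D (fun ω => s₁ * X₀ ω) = x := by
      rw [hD3 X₀ hX₀ s₁ hs₁, hs₁def, div_mul_cancel₀ x hd₀.ne']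
    have hDY : D (fun ω => s₂ * X₀ ω) = y := by
      rw [hD3 X₀ hX₀ s₂ hs₂, hs₂def, div_mul_cancel₀ y hd₀.ne']
    have hDS : D (fun ω => s * X₀ ω) = a * x + (1 - a) * y := by
      rw [hD3 X₀ hX₀ s hs, hsdef, hs₁def, hs₂def]
      field_simp
    simp only [MD, hDX, hDY, hDS, integral_const_mul] at h
    have hsI : s * (∫ ω, X₀ ω ∂μ) = a * (s₁ * ∫ ω, X₀ ω ∂μ)
        + (1 - a) * (s₂ * ∫ ω, X₀ ω ∂μ) := by rw [hsdef]; ring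
    linarith [h, hsI]
  · -- g convex → convex risk measure
    intro hcx
    have hDmem : ∀ X, MemLp X p μ → D X ∈ Ici (0:ℝ) := fun X hX => hD0 X hX
    refine ⟨⟨?_, ?_⟩, ?_⟩
    · -- monotonicity
      intro X Y hX hY hle
      have hZ : MemLp (fun ω => X ω - Y ω) p μ := hX.sub hY
      have hZle : ∀ᵐ ω ∂μ, X ω - Y ω ≤ 0 := hle.mono fun ω h => by linarith
      have hDZ := hDr.1 (fun ω => X ω - Y ω) hZ ⟨0, hZle⟩
      have hess : essSup (fun ω => X ω - Y ω) μ ≤ 0 := essSup_le_zero' μ _ hZle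
      have hintZ : ∫ ω, (X ω - Y ω) ∂μ = (∫ ω, X ω ∂μ) - ∫ ω, Y ω ∂μ :=
        integral_sub (hX.integrable hp) (hY.integrable hp)
      have hDZle : D (fun ω => X ω - Y ω) ≤ (∫ ω, Y ω ∂μ) - ∫ ω, X ω ∂μ := by
        rw [hintZ] at hDZ; linarith
      have hsub : D X ≤ D Y + D (fun ω => X ω - Y ω) := by
        have h4 := hD4 Y (fun ω => X ω - Y ω) hY hZ
        have hfe : (fun ω => Y ω + (X ω - Y ω)) = X := by funext ω; ring
        rwa [hfe] at h4
      have hmean : (∫ ω, X ω ∂μ) ≤ ∫ ω, Y ω ∂μ :=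
        integral_mono_ae (hX.integrable hp) (hY.integrable hp) hle
      simp only [MD]
      rcases le_or_gt (D X) (D Y) with hxy | hxy
      · have := hg_mono (hDmem X hX) (hDmem Y hY) hxy
        linarith
      · have habs := hg_lip (D X) (D Y) (hD0 X hX) (hD0 Y hY)
        rw [abs_of_pos (by linarith : (0:ℝ) < D X - D Y)] at habs
        have h1 : g (D X) - g (D Y) ≤ |g (D X) - g (D Y)| := le_abs_self _
        linarith
    · -- cash additivity
      intro X hX c
      simp only [MD, hD1 X hX c,
        integral_add (hX.integrable hp) (integrable_const c), integral_const,
        measure_univ, probReal_univ, ENNReal.toReal_one, smul_eq_mul, one_mul]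
      ring
    · -- convexity
      intro X Y hX hY l hl0 hl1
      have hlX : MemLp (fun ω => l * X ω) p μ := hX.const_mul l
      have hlY : MemLp (fun ω => (1 - l) * Y ω) p μ := hY.const_mul (1 - l)
      have hcomb : MemLp (fun ω => l * X ω + (1 - l) * Y ω) p μ := hlX.add hlY
      have hDle : D (fun ω => l * X ω + (1 - l) * Y ω) ≤ l * D X + (1 - l) * D Y := by
        have h4 := hD4 _ _ hlX hlY
        rw [hD3 X hX l hl0, hD3 Y hY (1 - l) (by linarith)] at h4
        exact h4
      have hmem2 : l * D X + (1 - l) * D Y ∈ Ici (0:ℝ) := by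
        have h1 := hD0 X hX; have h2 := hD0 Y hY
        exact add_nonneg (mul_nonneg hl0 h1) (mul_nonneg (by linarith) h2)
      have hg1 : g (D (fun ω => l * X ω + (1 - l) * Y ω))
          ≤ g (l * D X + (1 - l) * D Y) :=
        hg_mono (hDmem _ hcomb) hmem2 hDle
      have hg2 : g (l * D X + (1 - l) * D Y) ≤ l * g (D X) + (1 - l) * g (D Y) := by
        have := hcx.2 (hDmem X hX) (hDmem Y hY) hl0 (by linarith : (0:ℝ) ≤ 1 - l)
          (by ring : l + (1 - l) = 1)
        simpa using this
      have hint : ∫ ω, (l * X ω + (1 - l) * Y ω) ∂μ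
          = l * (∫ ω, X ω ∂μ) + (1 - l) * ∫ ω, Y ω ∂μ := by
        rw [integral_add ((hX.integrable hp).const_mul l)
          ((hY.integrable hp).const_mul (1 - l)), integral_const_mul, integral_const_mul]
      simp only [MD, hint]
      nlinarith [hg1, hg2]
end
end

section
/- Fix p ∈ [1,∞], D ∈ 𝒟̄^p and g ∈ 𝒢. Then MD^D_g is a star-shaped risk measure if and only if g is star-shaped, i.e., g(0) = 0 and g(λx) ≤ λg(x) for all x ≥ 0 and λ ∈ [0,1]. -/
open MeasureTheory Filter Set
open scoped ENNReal

noncomputable section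

variable {Ω : Type*} [MeasurableSpace Ω]

/-- Theorem (prop:2 (iii)): `MD^D_g` is a star-shaped risk measure iff `g` is star-shaped. -/
theorem MD_starShaped_iff_starShaped
    (μ : Measure Ω) [IsProbabilityMeasure μ] (hna : Nonatomic μ)
    (p : ℝ≥0∞) (hp : 1 ≤ p)
    (D : (Ω → ℝ) → ℝ) (hD : IsDeviation μ p D) (hDl : LawInvariant μ p D)
    (hDr : RangeNormalized μ p D)
    (g : ℝ → ℝ) (hg : IsRiskWeight g) :
    StarShapedRM μ p (MD μ D g) ↔
      (g 0 = 0 ∧ ∀ x : ℝ, 0 ≤ x → ∀ l : ℝ, 0 ≤ l → l ≤ 1 → g (l * x) ≤ l * g x) := by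
  obtain ⟨hD0, hD1, hD2, hD3, hD4⟩ := hD
  obtain ⟨hgnc, hgmono, hglip, hg0⟩ := hg
  constructor
  · rintro ⟨-, -, hstar⟩
    refine ⟨hg0, fun x hx l hl0 hl1 => ?_⟩
    obtain ⟨X₀, hX₀m, -, -, hX₀pos⟩ := hDr.2 0 one_pos
    have hDX₀ : 0 < D X₀ := by simpa using hX₀pos
    set m : ℝ := ∫ ω, X₀ ω ∂μ with hm
    have hint : Integrable X₀ μ := hX₀m.integrable hp
    set X₁ : Ω → ℝ := fun ω => X₀ ω + (-m) with hX₁def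
    have hX₁m : MemLp X₁ p μ := hX₀m.add (memLp_const _)
    have hEX₁ : ∫ ω, X₁ ω ∂μ = 0 := by
      simp [hX₁def, integral_add hint (integrable_const _), ← hm]
    have hDX₁ : D X₁ = D X₀ := hD1 X₀ hX₀m (-m)
    set a : ℝ := x / D X₀ with ha_def
    have ha : 0 ≤ a := div_nonneg hx hDX₀.le
    set X₂ : Ω → ℝ := fun ω => a * X₁ ω with hX₂def
    have hX₂m : MemLp X₂ p μ := hX₁m.const_mul a
    have hDX₂ : D X₂ = x := by
      have := hD3 X₁ hX₁m a ha
      rw [hX₂def, this, hDX₁, ha_def]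
      field_simp
    have hEX₂ : ∫ ω, X₂ ω ∂μ = 0 := by
      simp [hX₂def, integral_const_mul, hEX₁]
    have h := hstar X₂ hX₂m l hl0 hl1
    simp only [MD] at h
    have hDl2 : D (fun ω => l * X₂ ω) = l * x := by
      rw [hD3 X₂ hX₂m l hl0, hDX₂]
    have hEl2 : ∫ ω, l * X₂ ω ∂μ = 0 := by
      rw [integral_const_mul, hEX₂, mul_zero]
    rw [hDl2, hEl2, hDX₂, hEX₂] at h
    nlinarith [h]
  · rintro ⟨-, hstar⟩
    refine ⟨⟨?_, ?_⟩, ?_, ?_⟩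
    · intro X Y hX hY hXY
      have hintX : Integrable X μ := hX.integrable hp
      have hintY : Integrable Y μ := hY.integrable hp
      set Z : Ω → ℝ := fun ω => X ω - Y ω with hZdef
      have hZm : MemLp Z p μ := hX.sub hY
      have hZle : ∀ᵐ ω ∂μ, Z ω ≤ 0 := hXY.mono fun ω h => sub_nonpos.2 h
      have hDZ : D Z ≤ essSup Z μ - ∫ ω, Z ω ∂μ :=
        hDr.1 Z hZm ⟨0, hZle⟩
      have hess : essSup Z μ ≤ 0 := by
        have h0 : (0:ℝ) ∈ {a : ℝ | ∀ᶠ ω in ae μ, Z ω ≤ a} := hZle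
        rw [essSup, Filter.limsup_eq]
        by_cases hb : BddBelow {a : ℝ | ∀ᶠ ω in ae μ, Z ω ≤ a}
        · exact csInf_le hb h0
        · rw [Real.sInf_of_not_bddBelow hb]
      have hEZ : ∫ ω, Z ω ∂μ = (∫ ω, X ω ∂μ) - ∫ ω, Y ω ∂μ :=
        integral_sub hintX hintY
      set e : ℝ := (∫ ω, Y ω ∂μ) - ∫ ω, X ω ∂μ with he_def
      have he : 0 ≤ e := by
        have := integral_mono_ae hintX hintY hXY
        simp only [he_def]; linarith
      have hDZe : D Z ≤ e := by rw [hEZ] at hDZ; simp only [he_def]; linarith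
      have hDXle : D X ≤ D Y + e := by
        have hsub := hD4 Y Z hY hZm
        have hxe : (fun ω => Y ω + Z ω) = X := by
          funext ω; simp [hZdef]
        rw [hxe] at hsub
        linarith
      have h1 : g (D X) ≤ g ((D Y) + e) := by
        refine hgmono (hD0 X hX) ?_ hDXle
        have : (0:ℝ) ≤ D Y := hD0 Y hY
        simp only [mem_Ici]; linarith
      have h2 : g ((D Y) + e) - g (D Y) ≤ e := by
        have hDY : (0:ℝ) ≤ D Y := hD0 Y hY
        have hl := hglip ((D Y) + e) (D Y) (by linarith) hDY
        have : |g ((D Y) + e) - g (D Y)| ≤ e := by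
          calc |g ((D Y) + e) - g (D Y)| ≤ |(D Y) + e - D Y| := hl
            _ = e := by rw [show (D Y) + e - D Y = e by ring, abs_of_nonneg he]
        exact le_trans (le_abs_self _) this
      simp only [MD, he_def] at *
      linarith
    · intro X hX c
      simp only [MD, hD1 X hX c]
      rw [integral_add (hX.integrable hp) (integrable_const c), integral_const]
      simp [measure_univ]
      ring
    · have hd0 : D (fun _ : Ω => (0:ℝ)) = 0 := by
        have := hD3 (fun _ => (0:ℝ)) (memLp_const 0) 0 le_rfl
        simpa using this
      simp [MD, hd0, hg0]
    · intro X hX l hl0 hl1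
      simp only [MD]
      rw [hD3 X hX l hl0, integral_const_mul]
      have h := hstar (D X) (hD0 X hX) l hl0 hl1
      nlinarith [h]
end
end

section
/- Fix p ∈ [1,∞], g ∈ 𝒢 and D ∈ 𝒟̄^p, and let c = sup_{x > 0} g(x)/x (which lies in (0,1]). Then for every X ∈ L^p, sup_{λ > 0} MD^D_g(λX)/λ = c·D(X) + E[X]. Consequently, X ↦ c·D(X) + E[X] is the smallest positively homogeneous functional on L^p dominating MD^D_g, and it is the smallest coherent risk measure dominating MD^D_g. -/
open MeasureTheory Filter Set
open scoped ENNReal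

noncomputable section

variable {Ω : Type*} [MeasurableSpace Ω]

lemma essSup_nonpos_aux {Ω : Type*} [MeasurableSpace Ω] (μ : Measure Ω)
    (W : Ω → ℝ) (h : ∀ᵐ ω ∂μ, W ω ≤ 0) : essSup W μ ≤ 0 := by
  rw [essSup, limsup_eq]
  by_cases hb : BddBelow {a : ℝ | ∀ᶠ ω in ae μ, W ω ≤ a}
  · exact csInf_le hb h
  · rw [csInf_of_not_bddBelow hb, Real.sInf_empty]

/-- Proposition (prop:smCoherant): with `c = sup_{x>0} g(x)/x ∈ (0,1]`,
`sup_{λ>0} MD^D_g(λX)/λ = c D(X) + E[X]`; this functional is the smallest positively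
homogeneous functional dominating `MD^D_g` and the smallest coherent risk measure
dominating `MD^D_g`. -/
theorem MD_smallest_dominating_coherent
    (μ : Measure Ω) [IsProbabilityMeasure μ] (hna : Nonatomic μ)
    (p : ℝ≥0∞) (hp : 1 ≤ p)
    (D : (Ω → ℝ) → ℝ) (hD : IsDeviation μ p D) (hDl : LawInvariant μ p D)
    (hDr : RangeNormalized μ p D)
    (g : ℝ → ℝ) (hg : IsRiskWeight g)
    (c : ℝ) (hc : c = sSup {r : ℝ | ∃ x : ℝ, 0 < x ∧ r = g x / x}) :
    (0 < c ∧ c ≤ 1) ∧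
    (∀ X, MemLp X p μ →
      sSup {r : ℝ | ∃ l : ℝ, 0 < l ∧ r = MD μ D g (fun ω => l * X ω) / l}
        = c * D X + ∫ ω, X ω ∂μ) ∧
    (PosHom μ p (fun X => c * D X + ∫ ω, X ω ∂μ) ∧
      (∀ X, MemLp X p μ → MD μ D g X ≤ c * D X + ∫ ω, X ω ∂μ) ∧
      (∀ ρ : (Ω → ℝ) → ℝ, PosHom μ p ρ →
        (∀ X, MemLp X p μ → MD μ D g X ≤ ρ X) →
        ∀ X, MemLp X p μ → c * D X + ∫ ω, X ω ∂μ ≤ ρ X)) ∧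
    (Coherent μ p (fun X => c * D X + ∫ ω, X ω ∂μ) ∧
      (∀ ρ : (Ω → ℝ) → ℝ, Coherent μ p ρ →
        (∀ X, MemLp X p μ → MD μ D g X ≤ ρ X) →
        ∀ X, MemLp X p μ → c * D X + ∫ ω, X ω ∂μ ≤ ρ X)) := by
  obtain ⟨hDnn, hDtr, hDpos, hDhom, hDsub⟩ := hD
  obtain ⟨⟨x₀, y₀, hx₀, hy₀, hxy₀⟩, hmono, hlip, hg0⟩ := hg
  -- basic facts about g
  have hgnn : ∀ x : ℝ, 0 ≤ x → 0 ≤ g x := fun x hx => hg0 ▸ hmono (Set.mem_Ici.mpr le_rfl) hx hx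
  have hgle : ∀ x : ℝ, 0 ≤ x → g x ≤ x := by
    intro x hx
    have := hlip x 0 hx le_rfl
    rw [hg0, sub_zero, sub_zero, abs_of_nonneg hx] at this
    exact (le_abs_self _).trans this
  -- a point where g is positive
  obtain ⟨z, hz, hgz⟩ : ∃ z : ℝ, 0 < z ∧ 0 < g z := by
    rcases eq_or_ne (g x₀) 0 with h | h
    · have hy : g y₀ ≠ 0 := fun hy => hxy₀ (h.trans hy.symm)
      have : y₀ ≠ 0 := fun h0 => hy (h0 ▸ hg0)
      exact ⟨y₀, lt_of_le_of_ne hy₀ (Ne.symm this), lt_of_le_of_ne (hgnn _ hy₀) (Ne.symm hy)⟩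
    · have : x₀ ≠ 0 := fun h0 => h (h0 ▸ hg0)
      exact ⟨x₀, lt_of_le_of_ne hx₀ (Ne.symm this), lt_of_le_of_ne (hgnn _ hx₀) (Ne.symm h)⟩
  set R : Set ℝ := {r : ℝ | ∃ x : ℝ, 0 < x ∧ r = g x / x} with hR
  have hRne : R.Nonempty := ⟨g z / z, z, hz, rfl⟩
  have hRbdd : BddAbove R := by
    refine ⟨1, ?_⟩
    rintro r ⟨x, hx, rfl⟩
    rw [div_le_one hx]
    exact hgle x hx.le
  have hcpos : 0 < c := by
    have h1 : g z / z ≤ c := hc ▸ le_csSup hRbdd ⟨z, hz, rfl⟩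
    have : 0 < g z / z := div_pos hgz hz
    linarith
  have hc1 : c ≤ 1 := by
    rw [hc]
    refine csSup_le hRne ?_
    rintro r ⟨x, hx, rfl⟩
    rw [div_le_one hx]
    exact hgle x hx.le
  have hgc : ∀ t : ℝ, 0 ≤ t → g t ≤ c * t := by
    intro t ht
    rcases eq_or_lt_of_le ht with h | h
    · simp [← h, hg0]
    · have h1 : g t / t ≤ c := hc ▸ le_csSup hRbdd ⟨t, h, rfl⟩
      rw [div_le_iff₀ h] at h1
      linarith [h1]
  -- the sup formula
  have hsup : ∀ X, MemLp X p μ →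
      sSup {r : ℝ | ∃ l : ℝ, 0 < l ∧ r = MD μ D g (fun ω => l * X ω) / l}
        = c * D X + ∫ ω, X ω ∂μ := by
    intro X hX
    set d : ℝ := D X with hd
    set E : ℝ := ∫ ω, X ω ∂μ with hE
    have hdnn : 0 ≤ d := hDnn X hX
    have hMD : ∀ l : ℝ, 0 < l → MD μ D g (fun ω => l * X ω) = g (l * d) + l * E := by
      intro l hl
      unfold MD
      rw [hDhom X hX l hl.le, integral_const_mul]
    set S : Set ℝ := {r : ℝ | ∃ l : ℝ, 0 < l ∧ r = MD μ D g (fun ω => l * X ω) / l} with hS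
    have hSne : S.Nonempty := ⟨MD μ D g (fun ω => (1:ℝ) * X ω) / 1, 1, one_pos, rfl⟩
    have hub : ∀ r ∈ S, r ≤ c * d + E := by
      rintro r ⟨l, hl, rfl⟩
      rw [hMD l hl, div_le_iff₀ hl]
      have := hgc (l * d) (mul_nonneg hl.le hdnn)
      nlinarith
    refine (IsLUB.csSup_eq ⟨hub, ?_⟩ hSne)
    intro b hb
    have h1 : g (1 * d) + 1 * E ≤ b := by
      have := hb ⟨1, one_pos, rfl⟩
      rwa [hMD 1 one_pos, div_one] at this
    rcases eq_or_lt_of_le hdnn with hd0 | hd0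
    · rw [one_mul, ← hd0, hg0] at h1
      rw [← hd0]
      linarith
    · have hcle : c ≤ (b - E) / d := by
        rw [hc]
        refine csSup_le hRne ?_
        rintro r ⟨x, hx, rfl⟩
        have ht : (0:ℝ) < x / d := div_pos hx hd0
        have htd : (x / d) * d = x := div_mul_cancel₀ x (ne_of_gt hd0)
        have h2 : (g ((x / d) * d) + (x / d) * E) / (x / d) ≤ b := by
          have := hb ⟨x / d, ht, rfl⟩
          rwa [hMD (x / d) ht] at this
        rw [htd, div_le_iff₀ ht] at h2
        rw [div_le_div_iff₀ hx hd0]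
        have h3 := mul_le_mul_of_nonneg_right h2 hd0.le
        have e1 : (g x + x / d * E) * d = g x * d + x * E := by field_simp
        have e2 : b * (x / d) * d = b * x := by field_simp
        linarith [h3, e1, e2]
      rw [le_div_iff₀ hd0] at hcle
      linarith
  -- domination
  have hdom : ∀ X, MemLp X p μ → MD μ D g X ≤ c * D X + ∫ ω, X ω ∂μ := by
    intro X hX
    unfold MD
    have := hgc (D X) (hDnn X hX)
    linarith
  -- positive homogeneity
  have hPH : PosHom μ p (fun X => c * D X + ∫ ω, X ω ∂μ) := by
    intro X hX l hl
    simp only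
    rw [hDhom X hX l hl.le, integral_const_mul]
    ring
  -- minimality among positively homogeneous dominating functionals
  have hmin : ∀ ρ : (Ω → ℝ) → ℝ, PosHom μ p ρ →
      (∀ X, MemLp X p μ → MD μ D g X ≤ ρ X) →
      ∀ X, MemLp X p μ → c * D X + ∫ ω, X ω ∂μ ≤ ρ X := by
    intro ρ hρ hρdom X hX
    rw [← hsup X hX]
    refine csSup_le ⟨MD μ D g (fun ω => (1:ℝ) * X ω) / 1, 1, one_pos, rfl⟩ ?_
    rintro r ⟨l, hl, rfl⟩
    rw [div_le_iff₀ hl]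
    calc MD μ D g (fun ω => l * X ω) ≤ ρ (fun ω => l * X ω) :=
          hρdom _ (hX.const_mul l)
      _ = l * ρ X := hρ X hX l hl
      _ = ρ X * l := mul_comm _ _
  -- coherence
  have hcoh : Coherent μ p (fun X => c * D X + ∫ ω, X ω ∂μ) := by
    refine ⟨?_, ?_, hPH, ?_⟩
    · -- monotone
      intro X Y hX hY hXY
      simp only
      set W : Ω → ℝ := fun ω => X ω - Y ω with hW
      have hWmem : MemLp W p μ := hX.sub hY
      have hWle : ∀ᵐ ω ∂μ, W ω ≤ 0 := by
        filter_upwards [hXY] with ω h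
        simp [hW]; linarith
      have hess : essSup W μ ≤ 0 := essSup_nonpos_aux μ W hWle
      have hDW : D W ≤ essSup W μ - ∫ ω, W ω ∂μ :=
        hDr.1 W hWmem ⟨0, hWle⟩
      have hintW : ∫ ω, W ω ∂μ = (∫ ω, X ω ∂μ) - ∫ ω, Y ω ∂μ :=
        integral_sub (hX.integrable hp) (hY.integrable hp)
      have hXeq : X = fun ω => Y ω + W ω := by
        funext ω; simp [hW]
      have hDX : D X ≤ D Y + D W := by
        rw [hXeq]
        exact hDsub Y W hY hWmem
      have h1 : c * D X ≤ c * (D Y + D W) :=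
        mul_le_mul_of_nonneg_left hDX hcpos.le
      have h2 : c * D W ≤ D W := by
        nlinarith [hDnn W hWmem]
      linarith
    · -- cash additive
      intro X hX cc
      simp only
      rw [hDtr X hX cc, integral_add (hX.integrable hp) (integrable_const cc),
        integral_const]
      simp
      ring
    · -- subadditive
      intro X Y hX hY
      simp only
      have h1 := hDsub X Y hX hY
      have h2 : ∫ ω, X ω + Y ω ∂μ = (∫ ω, X ω ∂μ) + ∫ ω, Y ω ∂μ :=
        integral_add (hX.integrable hp) (hY.integrable hp)
      nlinarith
  exact ⟨⟨hcpos, hc1⟩, hsup, ⟨hPH, hdom, hmin⟩,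
    hcoh, fun ρ hρ hρdom => hmin ρ hρ.2.2.1 hρdom⟩
end
end

section
/- Fix p ∈ [1,∞], let D ∈ 𝒟̄^p, and let U(X) = V(E[X], D(X)) be a mean-deviation model with U(X) < ∞ for all X ∈ L^p. Suppose that either V is left-continuous in its second argument, or the supremum defining the range normalization of D is attained by some nonconstant X ∈ L^p. Then U satisfies monotonicity [M] (X ≤ Y a.s. implies U(X) ≤ U(Y)) if and only if V(m − a, d + a) ≤ V(m, d) for all m ∈ ℝ and all a, d ≥ 0. -/
open MeasureTheory Filter Set
open scoped ENNReal

noncomputable section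

variable {Ω : Type*} [MeasurableSpace Ω]

lemma aux_freq_ge (μ : Measure Ω) [IsProbabilityMeasure μ] (f : Ω → ℝ) :
    ∃ b : ℝ, ∃ᶠ ω in ae μ, b ≤ f ω := by
  by_contra h
  push_neg at h
  have h' : ∀ n : ℕ, ∀ᵐ ω ∂μ, f ω < -(n : ℝ) := by
    intro n
    have := h (-(n : ℝ))
    filter_upwards [this] with ω hω
    exact hω
  have hall : ∀ᵐ ω ∂μ, ∀ n : ℕ, f ω < -(n : ℝ) := ae_all_iff.mpr h'
  obtain ⟨ω, hω⟩ := hall.exists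
  obtain ⟨n, hn⟩ := exists_nat_gt (-(f ω))
  have := hω n
  linarith

lemma aux_essSup_le (μ : Measure Ω) [IsProbabilityMeasure μ] (f : Ω → ℝ) (c : ℝ)
    (h : ∀ᵐ ω ∂μ, f ω ≤ c) : essSup f μ ≤ c := by
  obtain ⟨b, hb⟩ := aux_freq_ge μ f
  exact limsup_le_of_le (Filter.IsCoboundedUnder.of_frequently_ge hb) h

lemma aux_ae_le_essSup (μ : Measure Ω) [IsProbabilityMeasure μ] (f : Ω → ℝ) (c : ℝ)
    (h : ∀ᵐ ω ∂μ, f ω ≤ c) : ∀ᵐ ω ∂μ, f ω ≤ essSup f μ :=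
  ae_le_essSup ⟨c, by simpa [eventually_map] using h⟩


/-- Proposition (prop:chMon): characterization of monotonicity of a mean-deviation
model `U = V(E, D)` with `D ∈ 𝒟̄^p`, under left-continuity of `V` in its second
argument or attainability of the range-normalization supremum. -/
theorem meanDeviation_monotone_iff
    (μ : Measure Ω) [IsProbabilityMeasure μ] (hna : Nonatomic μ)
    (p : ℝ≥0∞) (hp : 1 ≤ p)
    (V : ℝ → ℝ → EReal) (hV : IsMDModelV V)
    (D : (Ω → ℝ) → ℝ) (hD : IsDeviation μ p D) (hDl : LawInvariant μ p D)
    (hDr : RangeNormalized μ p D)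
    (hfin : ∀ X, MemLp X p μ → V (∫ ω, X ω ∂μ) (D X) ≠ ⊤)
    (hcont :
      (∀ m d : ℝ, 0 ≤ d → ContinuousWithinAt (fun t => V m t) (Ico 0 d) d) ∨
      (∃ X, MemLp X p μ ∧ ¬ AEConst μ X ∧ (∃ c : ℝ, ∀ᵐ ω ∂μ, X ω ≤ c) ∧
        D X = essSup X μ - ∫ ω, X ω ∂μ)) :
    MonotoneE μ p (fun X => V (∫ ω, X ω ∂μ) (D X)) ↔
      ∀ (m a d : ℝ), 0 ≤ a → 0 ≤ d → V (m - a) (d + a) ≤ V m d := by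
  obtain ⟨hD0, hDt, hDpos, hDh, hDsub⟩ := hD
  constructor
  · -- Monotone → inequality
    intro hM m a d ha hd
    -- key step: from a suitable T with D T = t, get V (m-a) (d + a*t) ≤ V m d
    have key : ∀ T : Ω → ℝ, MemLp T p μ → (∫ ω, T ω ∂μ) = 0 →
        (∀ᵐ ω ∂μ, T ω ≤ 1) → 0 < D T → V (m - a) (d + a * D T) ≤ V m d := by
      intro T hT hT0 hT1 ht
      have hTi : Integrable T μ := hT.integrable hp
      have hint : ∀ (c e : ℝ), ∫ ω, (c * T ω + e) ∂μ = e := by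
        intro c e
        rw [integral_add (hTi.const_mul c) (integrable_const e), integral_const_mul,
          integral_const]
        simp [hT0]
      have hDc : ∀ (c e : ℝ), 0 ≤ c → D (fun ω => c * T ω + e) = c * D T := by
        intro c e hc
        have h1 := hDt (fun ω => c * T ω) (hT.const_mul c) e
        have h2 := hDh T hT c hc
        exact h1.trans h2
      have hc1 : (0:ℝ) ≤ d / D T := div_nonneg hd ht.le
      have hc2 : (0:ℝ) ≤ d / D T + a := by linarith
      have hXm : MemLp (fun ω => (d / D T + a) * T ω + (m - a)) p μ :=
        (hT.const_mul _).add (memLp_const _)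
      have hYm : MemLp (fun ω => (d / D T) * T ω + m) p μ :=
        (hT.const_mul _).add (memLp_const _)
      have hle : ∀ᵐ ω ∂μ, (d / D T + a) * T ω + (m - a) ≤ (d / D T) * T ω + m := by
        filter_upwards [hT1] with ω h1
        have h2 : a * T ω ≤ a * 1 := mul_le_mul_of_nonneg_left h1 ha
        nlinarith
      have hmono := hM _ _ hXm hYm hle
      simp only [hint, hDc _ _ hc1, hDc _ _ hc2] at hmono
      have e1 : (d / D T) * D T = d := div_mul_cancel₀ d ht.ne'
      have e2 : (d / D T + a) * D T = d + a * D T := by rw [add_mul, e1]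
      rw [e1, e2] at hmono
      exact hmono
    -- construction of normalized T from a bounded nonconstant X0
    have mk : ∀ X0 : Ω → ℝ, MemLp X0 p μ → ¬ AEConst μ X0 →
        (∃ c : ℝ, ∀ᵐ ω ∂μ, X0 ω ≤ c) →
        ∃ T : Ω → ℝ, MemLp T p μ ∧ (∫ ω, T ω ∂μ) = 0 ∧ (∀ᵐ ω ∂μ, T ω ≤ 1) ∧
          D T = D X0 / (essSup X0 μ - ∫ ω, X0 ω ∂μ) ∧
          0 < essSup X0 μ - ∫ ω, X0 ω ∂μ ∧
          D X0 ≤ essSup X0 μ - ∫ ω, X0 ω ∂μ := by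
      intro X0 hX0 hnc hbd
      obtain ⟨c, hc⟩ := hbd
      have hDX0 : 0 < D X0 := hDpos X0 hX0 hnc
      have hup : D X0 ≤ essSup X0 μ - ∫ ω, X0 ω ∂μ := hDr.1 X0 hX0 ⟨c, hc⟩
      have hs : 0 < essSup X0 μ - ∫ ω, X0 ω ∂μ := lt_of_lt_of_le hDX0 hup
      set E := ∫ ω, X0 ω ∂μ with hE
      set s := essSup X0 μ - E with hsdef
      refine ⟨fun ω => (1/s) * (X0 ω + (-E)), ((hX0.add (memLp_const _)).const_mul _), ?_, ?_, ?_, hs, hup⟩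
      · rw [integral_const_mul, integral_add (hX0.integrable hp) (integrable_const _),
          integral_const]
        simp [hE]
      · filter_upwards [aux_ae_le_essSup μ X0 c hc] with ω hω
        have h3 : X0 ω + -E ≤ s := by rw [hsdef]; linarith
        have h4 : (1/s) * (X0 ω + -E) ≤ (1/s) * s :=
          mul_le_mul_of_nonneg_left h3 (by positivity)
        rwa [one_div_mul_cancel hs.ne'] at h4
      · have h1 := hDt X0 hX0 (-E)
        have h2 := hDh (fun ω => X0 ω + -E) (hX0.add (memLp_const _)) (1/s) (by positivity)
        rw [h2, h1]
        ring
    rcases hcont with hlc | ⟨X0, hX0, hnc, hbd, hatt⟩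
    · -- left-continuity case
      rcases eq_or_lt_of_le ha with rfl | hapos
      · simp only [sub_zero, add_zero]
        exact le_refl _
      · -- a > 0 : approximate
        have hTn : ∀ n : ℕ, ∃ T : Ω → ℝ, MemLp T p μ ∧ (∫ ω, T ω ∂μ) = 0 ∧
            (∀ᵐ ω ∂μ, T ω ≤ 1) ∧ 1 - 1/((n:ℝ)+1) < D T ∧ D T ≤ 1 := by
          intro n
          have hk : (1 - 1/((n:ℝ)+1)) < 1 := by
            have : (0:ℝ) < 1/((n:ℝ)+1) := by positivity
            linarith
          obtain ⟨X0, hX0, hbd, hnc, hlt⟩ := hDr.2 _ hk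
          obtain ⟨T, hT, hT0, hT1, hTD, hs, hub⟩ := mk X0 hX0 hnc hbd
          refine ⟨T, hT, hT0, hT1, ?_, ?_⟩
          · rw [hTD]
            exact (lt_div_iff₀ hs).mpr hlt
          · rw [hTD]
            exact (div_le_one hs).mpr hub
        choose T hT1 hT2 hT3 hT4 hT5 using hTn
        have htpos : ∀ n, 0 < D (T n) := by
          intro n
          have : (0:ℝ) ≤ 1 - 1/((n:ℝ)+1) := by
            have h1 : 1/((n:ℝ)+1) ≤ 1 := by
              rw [div_le_one (by positivity)]
              simp
            linarith
          linarith [hT4 n]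
        have hvn : ∀ n, V (m - a) (d + a * D (T n)) ≤ V m d :=
          fun n => key (T n) (hT1 n) (hT2 n) (hT3 n) (htpos n)
        by_cases hone : ∃ n, D (T n) = 1
        · obtain ⟨n, hn⟩ := hone
          have := hvn n
          rwa [hn, mul_one] at this
        · push_neg at hone
          have htlt : ∀ n, D (T n) < 1 := fun n => lt_of_le_of_ne (hT5 n) (hone n)
          have h0 : Tendsto (fun n : ℕ => 1 - 1/((n:ℝ)+1)) atTop (nhds 1) := by
            have := tendsto_one_div_add_atTop_nhds_zero_nat (𝕜 := ℝ)
            simpa using tendsto_const_nhds.sub this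
          have htt : Tendsto (fun n => D (T n)) atTop (nhds 1) :=
            tendsto_of_tendsto_of_tendsto_of_le_of_le h0 tendsto_const_nhds
              (fun n => (hT4 n).le) (fun n => hT5 n)
          have hde : Tendsto (fun n => d + a * D (T n)) atTop (nhds (d + a)) := by
            have := (htt.const_mul a).const_add d
            simpa using this
          have hmem : ∀ n, d + a * D (T n) ∈ Ico 0 (d + a) := by
            intro n
            constructor
            · nlinarith [htpos n]
            · nlinarith [htlt n]
          have hcw := hlc (m - a) (d + a) (by linarith)
          have hseq : Tendsto (fun n => d + a * D (T n)) atTop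
              (nhdsWithin (d + a) (Ico 0 (d + a))) :=
            tendsto_nhdsWithin_iff.mpr ⟨hde, Filter.Eventually.of_forall hmem⟩
          have hlim : Tendsto (fun n => V (m - a) (d + a * D (T n))) atTop
              (nhds (V (m - a) (d + a))) := hcw.tendsto.comp hseq
          exact le_of_tendsto hlim (Filter.Eventually.of_forall fun n => hvn n)
    · -- attainment case
      obtain ⟨T, hT, hT0', hT1', hTD, hs, hub⟩ := mk X0 hX0 hnc hbd
      have hDT : D T = 1 := by
        rw [hTD, hatt]
        exact div_self hs.ne'
      have := key T hT hT0' hT1' (by rw [hDT]; norm_num)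
      rwa [hDT, mul_one] at this
  · -- inequality → Monotone
    intro h X Y hX hY hXY
    have hXi : Integrable X μ := hX.integrable hp
    have hYi : Integrable Y μ := hY.integrable hp
    have ha : 0 ≤ ∫ ω, Y ω ∂μ - ∫ ω, X ω ∂μ :=
      sub_nonneg.mpr (integral_mono_ae hXi hYi hXY)
    have hZ : MemLp (fun ω => X ω - Y ω) p μ := hX.sub hY
    have hZle : ∀ᵐ ω ∂μ, X ω - Y ω ≤ 0 := by
      filter_upwards [hXY] with ω hω; linarith
    have hDZ := hDr.1 _ hZ ⟨0, hZle⟩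
    have hess := aux_essSup_le μ (fun ω => X ω - Y ω) 0 hZle
    have hiZ : ∫ ω, (X ω - Y ω) ∂μ = ∫ ω, X ω ∂μ - ∫ ω, Y ω ∂μ := integral_sub hXi hYi
    have hDZa : D (fun ω => X ω - Y ω) ≤ ∫ ω, Y ω ∂μ - ∫ ω, X ω ∂μ := by
      rw [hiZ] at hDZ; linarith
    have hDX : D X ≤ D Y + D (fun ω => X ω - Y ω) := by
      have hsub := hDsub Y (fun ω => X ω - Y ω) hY hZ
      have hXeq : (fun ω => Y ω + (X ω - Y ω)) = X := by funext ω; ring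
      rwa [hXeq] at hsub
    show V (∫ ω, X ω ∂μ) (D X) ≤ V (∫ ω, Y ω ∂μ) (D Y)
    have step2 := h (∫ ω, Y ω ∂μ) (∫ ω, Y ω ∂μ - ∫ ω, X ω ∂μ) (D Y) ha (hD0 Y hY)
    rw [show (∫ ω, Y ω ∂μ) - ((∫ ω, Y ω ∂μ) - (∫ ω, X ω ∂μ)) = ∫ ω, X ω ∂μ from by ring]
      at step2
    refine le_trans ?_ step2
    exact hV.2.1 (∫ ω, X ω ∂μ) (mem_Ici.mpr (hD0 X hX))
      (mem_Ici.mpr (by linarith [hD0 Y hY])) (by linarith)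
end
end
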